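/- Let d ≥ 1, let H = (V, E) be a d-sparse finite graph, let 𝒳 be its d-critical cover, and let W ∈ Θ_k(𝒳) for some 0 ≤ k ≤ d − 1. Suppose every d-critical component of H whose vertex set contains W has at least d + 2 vertices. Then (d − k) · Σ_{U ∈ Θ_{k+1}(𝒳), W ⊂ U} (d_𝒳(U) − 1) − Σ_{U ∈ Θ_{k+2}(𝒳), W ⊂ U} (d_𝒳(U) − 1) < binom(d+1−k, 2) · (d_𝒳(W) − 1). -/

import Mathlib

open Finset
open scoped Classical

variable {α : Type*} [DecidableEq α]

/-- The set of edges of `E` with both endpoints in `X`. -/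
noncomputable def inducedEdges (E : Finset (Sym2 α)) (X : Finset α) : Finset (Sym2 α) :=
  E.filter fun e => ∀ v ∈ e, v ∈ X

/-- `i_G(X)`: the number of edges of `E` with both endpoints in `X`. -/
noncomputable def iG (E : Finset (Sym2 α)) (X : Finset α) : ℕ :=
  (inducedEdges E X).card

/-- `E` is a valid edge set on the vertex set `V`: edges are loopless and join vertices of `V`. -/
def ValidOn (V : Finset α) (E : Finset (Sym2 α)) : Prop :=
  ∀ e ∈ E, ¬ e.IsDiag ∧ ∀ v ∈ e, v ∈ V

/-- The graph `(V, E)` is `d`-sparse: every `X ⊆ V` with `|X| ≥ d` satisfies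
`i(X) ≤ d|X| - (d+1 choose 2)`. -/
noncomputable def Sparse (d : ℕ) (V : Finset α) (E : Finset (Sym2 α)) : Prop :=
  ∀ X ⊆ V, d ≤ X.card → iG E X + Nat.choose (d + 1) 2 ≤ d * X.card

/-- `(U, F)` is a subgraph of `(V, E)`. -/
def IsSubgraph (V : Finset α) (E : Finset (Sym2 α)) (U : Finset α) (F : Finset (Sym2 α)) :
    Prop :=
  U ⊆ V ∧ F ⊆ E ∧ ∀ e ∈ F, ∀ v ∈ e, v ∈ U

/-- The graph `(U, F)` is `d`-critical: either `|U| = 2` and `|F| = 1`, or `|U| ≥ d + 2` and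
`|F| = d|U| - (d+1 choose 2)`. -/
def Critical (d : ℕ) (U : Finset α) (F : Finset (Sym2 α)) : Prop :=
  (U.card = 2 ∧ F.card = 1) ∨
  (d + 2 ≤ U.card ∧ F.card + Nat.choose (d + 1) 2 = d * U.card)

/-- `(U, F)` is a `d`-critical subgraph of `(V, E)`. -/
def CritSubgraph (d : ℕ) (V : Finset α) (E : Finset (Sym2 α)) (U : Finset α)
    (F : Finset (Sym2 α)) : Prop :=
  IsSubgraph V E U F ∧ Critical d U F

/-- `(U, F)` is a `d`-critical component of `(V, E)`: a `d`-critical subgraph not properly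
contained in any other `d`-critical subgraph. -/
def CritComponent (d : ℕ) (V : Finset α) (E : Finset (Sym2 α)) (U : Finset α)
    (F : Finset (Sym2 α)) : Prop :=
  CritSubgraph d V E U F ∧
  ∀ U' F', CritSubgraph d V E U' F' → U ⊆ U' → F ⊆ F' → U = U' ∧ F = F'

/-- The `d`-critical cover of `(V, E)`: the family of vertex sets of its `d`-critical
components. -/
noncomputable def critCover (d : ℕ) (V : Finset α) (E : Finset (Sym2 α)) :
    Finset (Finset α) :=
  V.powerset.filter fun U => ∃ F, CritComponent d V E U F

/-- `d_𝒳(W)`: the number of members of the family `𝒳` containing `W`. -/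
def degX (𝒳 : Finset (Finset α)) (W : Finset α) : ℕ :=
  (𝒳.filter fun X => W ⊆ X).card

/-- `Θ_k(𝒳)`: the set of `k`-hinges of `𝒳`, i.e. `k`-element subsets of `V` lying in at least
two members of `𝒳`.  (For `k = 0` this is `{∅}` exactly when `|𝒳| ≥ 2`.) -/
noncomputable def theta (V : Finset α) (𝒳 : Finset (Finset α)) (k : ℕ) :
    Finset (Finset α) :=
  V.powerset.filter fun W => W.card = k ∧ 2 ≤ degX 𝒳 W

/-- `𝒳` is a cover of `(V, E)`: every member has at least two vertices and every edge is
induced by some member. -/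
def IsCover (E : Finset (Sym2 α)) (𝒳 : Finset (Finset α)) : Prop :=
  (∀ X ∈ 𝒳, 2 ≤ X.card) ∧ ∀ e ∈ E, ∃ X ∈ 𝒳, ∀ v ∈ e, v ∈ X

/-- `𝒳` is `t`-thin: any two distinct members intersect in at most `t` vertices. -/
def Thin (t : ℕ) (𝒳 : Finset (Finset α)) : Prop :=
  ∀ X ∈ 𝒳, ∀ Y ∈ 𝒳, X ≠ Y → (X ∩ Y).card ≤ t

/-- `(V, F)` is a maximal `d`-sparse (spanning) subgraph of `(V, E)`. -/
noncomputable def MaxSparse (d : ℕ) (V : Finset α) (E F : Finset (Sym2 α)) : Prop :=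
  F ⊆ E ∧ Sparse d V F ∧ ∀ e ∈ E, e ∉ F → ¬ Sparse d V (insert e F)


set_option linter.unusedSectionVars false

section Aux

variable {α : Type*} [DecidableEq α]

lemma inducedEdges_mono (E : Finset (Sym2 α)) {X Y : Finset α} (h : X ⊆ Y) :
    inducedEdges E X ⊆ inducedEdges E Y := by
  intro e he
  rw [inducedEdges, mem_filter] at he ⊢
  exact ⟨he.1, fun v hv => h (he.2 v hv)⟩

lemma mem_inducedEdges {E : Finset (Sym2 α)} {X : Finset α} {e : Sym2 α} :
    e ∈ inducedEdges E X ↔ e ∈ E ∧ ∀ v ∈ e, v ∈ X := by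
  rw [inducedEdges, mem_filter]

lemma sym2_mem_out_iff (e : Sym2 α) (v : α) : v ∈ e ↔ v = e.out.1 ∨ v = e.out.2 := by
  conv_lhs => rw [← e.out_eq]
  exact Sym2.mem_iff

lemma sym2_out_ne {e : Sym2 α} (h : ¬ e.IsDiag) : e.out.1 ≠ e.out.2 := by
  intro hh
  apply h
  rw [← e.out_eq]
  exact hh

lemma sym2_eq_of_pair_eq {a b a' b' : α} (hab : a ≠ b)
    (h : ({a, b} : Finset α) = {a', b'}) : s(a, b) = s(a', b') := by
  have ha : a ∈ ({a', b'} : Finset α) := by rw [← h]; simp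
  have hb : b ∈ ({a', b'} : Finset α) := by rw [← h]; simp
  simp only [mem_insert, mem_singleton] at ha hb
  rw [Sym2.eq_iff]
  rcases ha with ha | ha
  · rcases hb with hb | hb
    · exact absurd (ha.trans hb.symm) hab
    · exact Or.inl ⟨ha, hb⟩
  · rcases hb with hb | hb
    · exact Or.inr ⟨ha, hb⟩
    · exact absurd (ha.trans hb.symm) hab

/-- The vertex of `e` outside `W` (when `e` has mixed endpoints). -/
noncomputable def pickOut (W : Finset α) (e : Sym2 α) : α :=
  if e.out.1 ∈ W then e.out.2 else e.out.1

/-- The vertex of `e` inside `W` (when `e` has mixed endpoints). -/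
noncomputable def pickIn (W : Finset α) (e : Sym2 α) : α :=
  if e.out.1 ∈ W then e.out.1 else e.out.2

lemma pick_spec (W : Finset α) (e : Sym2 α) : e = s(pickIn W e, pickOut W e) := by
  rw [pickIn, pickOut]
  by_cases h : e.out.1 ∈ W <;> simp only [h, if_true, if_false] <;>
    [skip; rw [Sym2.eq_swap]] <;> (conv_lhs => rw [← e.out_eq])

lemma pickOut_mem (W : Finset α) (e : Sym2 α) : pickOut W e ∈ e := by
  rw [pickOut]
  split
  · exact Sym2.out_snd_mem e
  · exact Sym2.out_fst_mem e

lemma pickIn_mem (W : Finset α) (e : Sym2 α) : pickIn W e ∈ e := by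
  rw [pickIn]
  split
  · exact Sym2.out_fst_mem e
  · exact Sym2.out_snd_mem e

lemma pickOut_not_mem {W : Finset α} {e : Sym2 α} (h : ¬ ∀ v ∈ e, v ∈ W) :
    pickOut W e ∉ W := by
  push_neg at h
  obtain ⟨v, hv, hvW⟩ := h
  rw [sym2_mem_out_iff] at hv
  rw [pickOut]
  by_cases h1 : e.out.1 ∈ W
  · rw [if_pos h1]
    rcases hv with rfl | rfl
    · exact absurd h1 hvW
    · exact hvW
  · rw [if_neg h1]; exact h1

lemma pickIn_mem_W {W : Finset α} {e : Sym2 α} (h : ¬ ∀ v ∈ e, v ∉ W) :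
    pickIn W e ∈ W := by
  push_neg at h
  obtain ⟨v, hv, hvW⟩ := h
  rw [sym2_mem_out_iff] at hv
  rw [pickIn]
  by_cases h1 : e.out.1 ∈ W
  · rw [if_pos h1]; exact h1
  · rw [if_neg h1]
    rcases hv with rfl | rfl
    · exact absurd hvW h1
    · exact hvW

lemma card_inducedEdges_le (V : Finset α) (E : Finset (Sym2 α)) (hval : ValidOn V E)
    (W : Finset α) : (inducedEdges E W).card ≤ W.card.choose 2 := by
  rw [← Finset.card_powersetCard 2 W]
  apply Finset.card_le_card_of_injOn (fun e => {e.out.1, e.out.2})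
  · intro e he
    rw [Finset.mem_coe, mem_inducedEdges] at he
    have hnd : ¬ e.IsDiag := (hval e he.1).1
    rw [Finset.mem_coe, Finset.mem_powersetCard]
    constructor
    · intro v hv
      simp only [mem_insert, mem_singleton] at hv
      rcases hv with rfl | rfl
      · exact he.2 _ (Sym2.out_fst_mem e)
      · exact he.2 _ (Sym2.out_snd_mem e)
    · rw [Finset.card_insert_of_notMem (by simp [sym2_out_ne hnd]), Finset.card_singleton]
  · intro e he e' he' hee
    rw [Finset.mem_coe, mem_inducedEdges] at he he'
    have h := sym2_eq_of_pair_eq (sym2_out_ne (hval e he.1).1) hee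
    calc e = s(e.out.1, e.out.2) := by conv_lhs => rw [← e.out_eq]
    _ = s(e'.out.1, e'.out.2) := h
    _ = e' := by conv_rhs => rw [← e'.out_eq]

/-- the binomial identity -/
lemma choose_identity_nat {d k : ℕ} (hk : k ≤ d) :
    k.choose 2 + (d + 1).choose 2 = d * k + (d + 1 - k).choose 2 := by
  obtain ⟨j, rfl⟩ := Nat.exists_eq_add_of_le hk
  have h1 : k + j + 1 - k = j + 1 := by omega
  rw [h1]
  have : ((k.choose 2 + (k + j + 1).choose 2 : ℕ) : ℚ)
      = (((k + j) * k + (j + 1).choose 2 : ℕ) : ℚ) := by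
    push_cast [Nat.cast_choose_two]
    ring
  exact_mod_cast this

lemma choose_identity {d k : ℕ} (hk : k ≤ d) :
    (k.choose 2 : ℤ) + ((d + 1).choose 2 : ℤ) = d * k + ((d + 1 - k).choose 2 : ℤ) := by
  exact_mod_cast choose_identity_nat hk

end Aux

/-- the key hinge inequality for a fixed hinge `W` (Lemma 3.2 of the paper). -/
theorem stmt3 (d k : ℕ) (hd : 1 ≤ d) (hk : k ≤ d - 1)
    (V : Finset α) (E : Finset (Sym2 α)) (hval : ValidOn V E) (hsp : Sparse d V E)
    (𝒳 : Finset (Finset α)) (h𝒳 : 𝒳 = critCover d V E)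
    (W : Finset α) (hW : W ∈ theta V 𝒳 k)
    (hbig : ∀ U F, CritComponent d V E U F → W ⊆ U → d + 2 ≤ U.card) :
    ((d : ℤ) - k) *
        (∑ U ∈ (theta V 𝒳 (k + 1)).filter (fun X => W ⊂ X), ((degX 𝒳 U : ℤ) - 1)) -
      (∑ U ∈ (theta V 𝒳 (k + 2)).filter (fun X => W ⊂ X), ((degX 𝒳 U : ℤ) - 1)) <
      (Nat.choose (d + 1 - k) 2 : ℤ) * ((degX 𝒳 W : ℤ) - 1) := by
  classical
  set B : ℤ := ∑ U ∈ (theta V 𝒳 (k + 2)).filter (fun X => W ⊂ X), ((degX 𝒳 U : ℤ) - 1)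
    with hB
  set 𝒳W := 𝒳.filter (fun X => W ⊆ X) with h𝒳W
  set m := 𝒳W.card with hm
  set Y := 𝒳W.sup id with hYdef
  set nV : α → ℕ := fun v => (𝒳W.filter (fun X => v ∈ X)).card with hnV
  set nE : Sym2 α → ℕ := fun e => (𝒳W.filter (fun X => ∀ v ∈ e, v ∈ X)).card with hnE
  set EU : Finset (Sym2 α) := 𝒳W.sup (fun X => inducedEdges E X) with hEUdef
  have hWmem := hW
  rw [theta, mem_filter, mem_powerset] at hWmem
  obtain ⟨hWV, hWprop⟩ := hWmem
  obtain ⟨hWk, hWdeg⟩ := hWprop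
  have hdegW : degX 𝒳 W = m := rfl
  have hm2 : 2 ≤ m := hdegW ▸ hWdeg
  have hkd : k < d := by omega
  -- facts about members of 𝒳W
  have hXmem : ∀ X ∈ 𝒳W, W ⊆ X ∧ X ⊆ V ∧ d + 2 ≤ X.card ∧
      iG E X + Nat.choose (d + 1) 2 = d * X.card ∧
      ∃ F, CritComponent d V E X F ∧ F = inducedEdges E X := by
    intro X hX
    rw [h𝒳W, mem_filter] at hX
    obtain ⟨hX𝒳, hWX⟩ := hX
    rw [h𝒳, critCover, mem_filter, mem_powerset] at hX𝒳
    obtain ⟨hXV, F, hF⟩ := hX𝒳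
    have hbigX := hbig X F hF hWX
    have hFE : F ⊆ E := hF.1.1.2.1
    have hFX : ∀ e ∈ F, ∀ v ∈ e, v ∈ X := hF.1.1.2.2
    have hFsub : F ⊆ inducedEdges E X := fun e he => mem_inducedEdges.mpr ⟨hFE he, hFX e he⟩
    have hFcard : F.card + Nat.choose (d + 1) 2 = d * X.card := by
      rcases hF.1.2 with ⟨h2, _⟩ | ⟨_, h⟩
      · exfalso; omega
      · exact h
    have h1 : F.card ≤ iG E X := card_le_card hFsub
    have h2 : iG E X + Nat.choose (d + 1) 2 ≤ d * X.card := hsp X hXV (by omega)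
    have h3 : iG E X ≤ F.card := by rw [← hFcard] at h2; omega
    have h4 : iG E X = F.card := le_antisymm h3 h1
    have hiG : iG E X + Nat.choose (d + 1) 2 = d * X.card := by rw [h4]; exact hFcard
    have hFeq : F = inducedEdges E X :=
      Finset.eq_of_subset_of_card_le hFsub (le_of_eq h4)
    exact ⟨hWX, hXV, hbigX, hiG, F, hF, hFeq⟩
  have hYV : Y ⊆ V := Finset.sup_le fun X hX => (hXmem X hX).2.1
  have hmemY : ∀ v, v ∈ Y ↔ ∃ X ∈ 𝒳W, v ∈ X := by
    intro v; rw [hYdef]; exact Finset.mem_sup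
  have hsubY : ∀ X ∈ 𝒳W, X ⊆ Y := fun X hX => Finset.le_sup (f := id) hX
  have hWY : W ⊆ Y := by
    obtain ⟨X, hX⟩ := Finset.card_pos.mp (show 0 < m by omega)
    exact (hXmem X hX).1.trans (hsubY X hX)
  obtain ⟨X1, hX1, X2, hX2, hX12⟩ := Finset.one_lt_card.mp hm2
  have hYcard : d + 2 ≤ Y.card :=
    le_trans (hXmem X1 hX1).2.2.1 (card_le_card (hsubY X1 hX1))
  -- strict sparsity of Y
  have hYtight : iG E Y + Nat.choose (d + 1) 2 + 1 ≤ d * Y.card := by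
    have hle : iG E Y + Nat.choose (d + 1) 2 ≤ d * Y.card := hsp Y hYV (by omega)
    rcases lt_or_eq_of_le hle with h | h
    · exact h
    · exfalso
      have hsub : CritSubgraph d V E Y (inducedEdges E Y) := by
        refine ⟨⟨hYV, Finset.filter_subset _ _, ?_⟩, Or.inr ⟨hYcard, h⟩⟩
        intro e he v hv
        exact (mem_inducedEdges.mp he).2 v hv
      obtain ⟨-, -, -, -, F1, hC1, hF1⟩ := hXmem X1 hX1
      obtain ⟨-, -, -, -, F2, hC2, hF2⟩ := hXmem X2 hX2
      have h1 := hC1.2 Y (inducedEdges E Y) hsub (hsubY X1 hX1)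
        (by rw [hF1]; exact inducedEdges_mono E (hsubY X1 hX1))
      have hX2sub : X2 ⊆ X1 := h1.1 ▸ hsubY X2 hX2
      have h2 := hC2.2 X1 F1 hC1.1 hX2sub
        (by rw [hF2, hF1]; exact inducedEdges_mono E hX2sub)
      exact hX12 (h2.1.symm ▸ rfl)
  -- vertex double counting
  have hVD : ∑ X ∈ 𝒳W, X.card = ∑ v ∈ Y, nV v := by
    have h1 : ∀ X ∈ 𝒳W, X.card = ∑ v ∈ Y, (if v ∈ X then 1 else 0) := by
      intro X hX
      rw [← Finset.card_filter]
      congr 1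
      rw [Finset.filter_mem_eq_inter, Finset.inter_eq_right.mpr (hsubY X hX)]
    rw [Finset.sum_congr rfl h1, Finset.sum_comm]
    exact Finset.sum_congr rfl fun v _ => (Finset.card_filter _ _).symm
  -- edge facts
  have hEUE : EU ⊆ E := Finset.sup_le fun X _ => Finset.filter_subset _ _
  have hEUsup : ∀ X ∈ 𝒳W, inducedEdges E X ⊆ EU := fun X hX =>
    Finset.le_sup (f := fun X => inducedEdges E X) hX
  have hmemEU : ∀ e, e ∈ EU ↔ ∃ X ∈ 𝒳W, e ∈ inducedEdges E X := by
    intro e; rw [hEUdef]; exact Finset.mem_sup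
  have hED : ∑ X ∈ 𝒳W, iG E X = ∑ e ∈ EU, nE e := by
    have h1 : ∀ X ∈ 𝒳W, iG E X = ∑ e ∈ EU, (if e ∈ inducedEdges E X then 1 else 0) := by
      intro X hX
      rw [iG, ← Finset.card_filter]
      congr 1
      rw [Finset.filter_mem_eq_inter, Finset.inter_eq_right.mpr (hEUsup X hX)]
    rw [Finset.sum_congr rfl h1, Finset.sum_comm]
    refine Finset.sum_congr rfl fun e he => ?_
    rw [← Finset.card_filter]
    congr 1
    apply Finset.filter_congr
    intro X _
    have heE : e ∈ E := hEUE he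
    rw [mem_inducedEdges]
    constructor
    · exact fun h => h.2
    · exact fun h => ⟨heE, h⟩
  -- basic positivity
  have hnV1 : ∀ v ∈ Y, 1 ≤ nV v := by
    intro v hv
    obtain ⟨X, hX, hvX⟩ := (hmemY v).mp hv
    exact Finset.card_pos.mpr ⟨X, Finset.mem_filter.mpr ⟨hX, hvX⟩⟩
  have hnVW : ∀ v ∈ W, nV v = m := by
    intro v hv
    show (𝒳W.filter (fun X => v ∈ X)).card = m
    rw [Finset.filter_true_of_mem (fun X hX => (hXmem X hX).1 hv), hm]
  set A : ℤ := ∑ v ∈ Y \ W, ((nV v : ℤ) - 1) with hA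
  have hsumX : (∑ X ∈ 𝒳W, (X.card : ℤ)) = (Y.card : ℤ) + k * ((m : ℤ) - 1) + A := by
    have h0 : (∑ X ∈ 𝒳W, (X.card : ℤ)) = ∑ v ∈ Y, (nV v : ℤ) := by exact_mod_cast hVD
    have hWsum : ∑ v ∈ W, ((nV v : ℤ) - 1) = (k : ℤ) * ((m : ℤ) - 1) := by
      rw [Finset.sum_congr rfl (fun v hv => by rw [hnVW v hv])]
      rw [Finset.sum_const, hWk, nsmul_eq_mul]
    calc (∑ X ∈ 𝒳W, (X.card : ℤ)) = ∑ v ∈ Y, (nV v : ℤ) := h0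
      _ = ∑ v ∈ Y, ((1 : ℤ) + ((nV v : ℤ) - 1)) := by
          apply Finset.sum_congr rfl; intros; ring
      _ = ∑ v ∈ Y, (1 : ℤ) + ∑ v ∈ Y, ((nV v : ℤ) - 1) := Finset.sum_add_distrib
      _ = (Y.card : ℤ) + (∑ v ∈ Y \ W, ((nV v : ℤ) - 1) + ∑ v ∈ W, ((nV v : ℤ) - 1)) := by
          rw [Finset.sum_const, nsmul_eq_mul, mul_one,
            Finset.sum_sdiff (f := fun v => ((nV v : ℤ) - 1)) hWY]
      _ = (Y.card : ℤ) + k * ((m : ℤ) - 1) + A := by rw [hWsum, hA]; ring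
  -- the theta (k+1) sum equals A
  have hdeg_insert : ∀ v, v ∉ W → degX 𝒳 (insert v W) = nV v := by
    intro v hv
    rw [degX]
    have heq : 𝒳.filter (fun X => insert v W ⊆ X) = 𝒳W.filter (fun X => v ∈ X) := by
      rw [h𝒳W, Finset.filter_filter]
      apply Finset.filter_congr
      intro X _
      rw [Finset.insert_subset_iff]
      tauto
    rw [heq]
  have hAθ : (∑ U ∈ (theta V 𝒳 (k + 1)).filter (fun X => W ⊂ X), ((degX 𝒳 U : ℤ) - 1)) = A := by
    rw [hA]
    have hz : ∀ v ∈ Y \ W, v ∉ (Y \ W).filter (fun v => 2 ≤ nV v) → ((nV v : ℤ) - 1) = 0 := by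
      intro v hv hv'
      have h1 := hnV1 v (Finset.mem_sdiff.mp hv).1
      have h2 : ¬ 2 ≤ nV v := fun h => hv' (Finset.mem_filter.mpr ⟨hv, h⟩)
      have h3 : nV v = 1 := by omega
      rw [h3]; norm_num
    rw [← Finset.sum_subset (Finset.filter_subset _ _) hz]
    refine (Finset.sum_bij (fun v _ => insert v W) ?_ ?_ ?_ ?_).symm
    · intro v hv
      rw [Finset.mem_filter, Finset.mem_sdiff] at hv
      obtain ⟨⟨hvY, hvW⟩, hv2⟩ := hv
      rw [Finset.mem_filter, theta, Finset.mem_filter, Finset.mem_powerset]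
      refine ⟨⟨Finset.insert_subset (hYV hvY) hWV, ?_, ?_⟩, Finset.ssubset_insert hvW⟩
      · rw [Finset.card_insert_of_notMem hvW, hWk]
      · rw [hdeg_insert v hvW]; exact hv2
    · intro v hv v' hv' h
      rw [Finset.mem_filter, Finset.mem_sdiff] at hv hv'
      have h' : insert v W = insert v' W := h
      have hvmem : v ∈ insert v' W := h' ▸ Finset.mem_insert_self v W
      rcases Finset.mem_insert.mp hvmem with h' | h'
      · exact h'
      · exact absurd h' hv.1.2
    · intro U hU
      rw [Finset.mem_filter] at hU
      obtain ⟨hUθ, hWU⟩ := hU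
      rw [theta, Finset.mem_filter, Finset.mem_powerset] at hUθ
      obtain ⟨hUV, hUk, hUdeg⟩ := hUθ
      have hWsubU : W ⊆ U := hWU.subset
      have hcard : (U \ W).card = 1 := by
        rw [Finset.card_sdiff_of_subset hWsubU, hUk, hWk]; omega
      obtain ⟨v, hv⟩ := Finset.card_eq_one.mp hcard
      have hvU : v ∈ U \ W := by rw [hv]; exact Finset.mem_singleton_self v
      have hvW : v ∉ W := (Finset.mem_sdiff.mp hvU).2
      have hU_eq : U = insert v W := by
        apply Finset.Subset.antisymm
        · intro u hu
          by_cases huW : u ∈ W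
          · exact Finset.mem_insert_of_mem huW
          · have hu' : u ∈ U \ W := Finset.mem_sdiff.mpr ⟨hu, huW⟩
            rw [hv, Finset.mem_singleton] at hu'
            rw [hu']
            exact Finset.mem_insert_self v W
        · exact Finset.insert_subset (Finset.mem_sdiff.mp hvU).1 hWsubU
      have hdegU : degX 𝒳 U = nV v := by rw [hU_eq]; exact hdeg_insert v hvW
      have hv2 : 2 ≤ nV v := hdegU ▸ hUdeg
      have hvY : v ∈ Y := by
        have hpos : 0 < degX 𝒳 U := by omega
        obtain ⟨X, hX⟩ := Finset.card_pos.mp hpos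
        rw [Finset.mem_filter] at hX
        have hX𝒳W : X ∈ 𝒳W := by
          rw [h𝒳W, Finset.mem_filter]
          exact ⟨hX.1, hWsubU.trans hX.2⟩
        exact hsubY X hX𝒳W (hX.2 (Finset.mem_sdiff.mp hvU).1)
      exact ⟨v, Finset.mem_filter.mpr ⟨Finset.mem_sdiff.mpr ⟨hvY, hvW⟩, hv2⟩, hU_eq.symm⟩
    · intro v hv
      rw [Finset.mem_filter, Finset.mem_sdiff] at hv
      rw [hdeg_insert v hv.1.2]
  -- edge sums in ℤ
  set T : ℤ := ∑ e ∈ EU, ((nE e : ℤ) - 1) with hT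
  have hsumE : (∑ X ∈ 𝒳W, (iG E X : ℤ)) = (EU.card : ℤ) + T := by
    have h0 : (∑ X ∈ 𝒳W, (iG E X : ℤ)) = ∑ e ∈ EU, (nE e : ℤ) := by exact_mod_cast hED
    calc (∑ X ∈ 𝒳W, (iG E X : ℤ)) = ∑ e ∈ EU, (nE e : ℤ) := h0
      _ = ∑ e ∈ EU, ((1 : ℤ) + ((nE e : ℤ) - 1)) := by
          apply Finset.sum_congr rfl; intros; ring
      _ = ∑ e ∈ EU, (1 : ℤ) + ∑ e ∈ EU, ((nE e : ℤ) - 1) := Finset.sum_add_distrib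
      _ = (EU.card : ℤ) + T := by rw [Finset.sum_const, nsmul_eq_mul, mul_one, hT]
  have hiGsum : (∑ X ∈ 𝒳W, (iG E X : ℤ))
      = d * (∑ X ∈ 𝒳W, (X.card : ℤ)) - m * (Nat.choose (d + 1) 2 : ℤ) := by
    have h1 : ∀ X ∈ 𝒳W, (iG E X : ℤ) = d * (X.card : ℤ) - (Nat.choose (d + 1) 2 : ℤ) := by
      intro X hX
      have h := (hXmem X hX).2.2.2.1
      have h' := congrArg (Nat.cast : ℕ → ℤ) h
      push_cast at h'
      linarith
    rw [Finset.sum_congr rfl h1, Finset.sum_sub_distrib, Finset.sum_const, ← Finset.mul_sum,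
      nsmul_eq_mul, hm]
  have hEUcard : (EU.card : ℤ) ≤ d * (Y.card : ℤ) - (Nat.choose (d + 1) 2 : ℤ) - 1 := by
    have h1 : EU.card ≤ iG E Y :=
      card_le_card (Finset.sup_le fun X hX => inducedEdges_mono E (hsubY X hX))
    have h2 := hYtight
    have h1' : (EU.card : ℤ) ≤ (iG E Y : ℤ) := by exact_mod_cast h1
    have h2' : (iG E Y : ℤ) + (Nat.choose (d + 1) 2 : ℤ) + 1 ≤ (d : ℤ) * (Y.card : ℤ) := by
      exact_mod_cast h2
    linarith
  have hT1 : (d : ℤ) * k * ((m : ℤ) - 1) + d * A - ((m : ℤ) - 1) * (Nat.choose (d + 1) 2 : ℤ)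
      + 1 ≤ T := by
    have h := hsumE
    rw [hiGsum, hsumX] at h
    have hm1 : (1 : ℤ) ≤ (m : ℤ) := by exact_mod_cast Nat.one_le_of_lt hm2
    linarith [hEUcard]
  -- bounding T from above
  have hnEm : ∀ e, nE e ≤ m := fun e => Finset.card_filter_le _ _
  have hnE1 : ∀ e ∈ EU, 1 ≤ nE e := by
    intro e he
    obtain ⟨X, hX, heX⟩ := (hmemEU e).mp he
    exact Finset.card_pos.mpr ⟨X, Finset.mem_filter.mpr ⟨hX, (mem_inducedEdges.mp heX).2⟩⟩
  have hEUYv : ∀ e ∈ EU, ∀ v ∈ e, v ∈ Y := by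
    intro e he v hv
    obtain ⟨X, hX, heX⟩ := (hmemEU e).mp he
    exact hsubY X hX ((mem_inducedEdges.mp heX).2 v hv)
  have hm1Z : (0 : ℤ) ≤ (m : ℤ) - 1 := by
    have : (2 : ℤ) ≤ (m : ℤ) := by exact_mod_cast hm2
    linarith
  have hsplit : T = ∑ e ∈ EU.filter (fun e => ∀ v ∈ e, v ∈ W), ((nE e : ℤ) - 1)
      + ∑ e ∈ (EU.filter (fun e => ¬ ∀ v ∈ e, v ∈ W)).filter (fun e => ∀ v ∈ e, v ∉ W),
          ((nE e : ℤ) - 1)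
      + ∑ e ∈ (EU.filter (fun e => ¬ ∀ v ∈ e, v ∈ W)).filter (fun e => ¬ ∀ v ∈ e, v ∉ W),
          ((nE e : ℤ) - 1) := by
    rw [hT, ← Finset.sum_filter_add_sum_filter_not EU (fun e => ∀ v ∈ e, v ∈ W),
      ← Finset.sum_filter_add_sum_filter_not (EU.filter (fun e => ¬ ∀ v ∈ e, v ∈ W))
        (fun e => ∀ v ∈ e, v ∉ W)]
    ring
  have hb0 : ∑ e ∈ EU.filter (fun e => ∀ v ∈ e, v ∈ W), ((nE e : ℤ) - 1)
      ≤ (k.choose 2 : ℤ) * ((m : ℤ) - 1) := by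
    have h1 : ∀ e ∈ EU.filter (fun e => ∀ v ∈ e, v ∈ W), ((nE e : ℤ) - 1) ≤ ((m : ℤ) - 1) := by
      intro e _
      have := hnEm e
      have : (nE e : ℤ) ≤ (m : ℤ) := by exact_mod_cast this
      linarith
    calc ∑ e ∈ EU.filter (fun e => ∀ v ∈ e, v ∈ W), ((nE e : ℤ) - 1)
        ≤ (EU.filter (fun e => ∀ v ∈ e, v ∈ W)).card • ((m : ℤ) - 1) :=
          Finset.sum_le_card_nsmul _ _ _ h1
      _ = ((EU.filter (fun e => ∀ v ∈ e, v ∈ W)).card : ℤ) * ((m : ℤ) - 1) := nsmul_eq_mul _ _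
      _ ≤ (k.choose 2 : ℤ) * ((m : ℤ) - 1) := by
          have hsub : EU.filter (fun e => ∀ v ∈ e, v ∈ W) ⊆ inducedEdges E W := by
            intro e he
            rw [Finset.mem_filter] at he
            exact mem_inducedEdges.mpr ⟨hEUE he.1, he.2⟩
          have hcard : (EU.filter (fun e => ∀ v ∈ e, v ∈ W)).card ≤ k.choose 2 := by
            calc (EU.filter (fun e => ∀ v ∈ e, v ∈ W)).card
                ≤ (inducedEdges E W).card := card_le_card hsub
              _ ≤ W.card.choose 2 := card_inducedEdges_le V E hval W
              _ = k.choose 2 := by rw [hWk]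
          exact mul_le_mul_of_nonneg_right (by exact_mod_cast hcard) hm1Z
  -- mixed edges bound
  set EM := (EU.filter (fun e => ¬ ∀ v ∈ e, v ∈ W)).filter (fun e => ¬ ∀ v ∈ e, v ∉ W)
    with hEM
  have hEMfacts : ∀ e ∈ EM, e ∈ EU ∧ (¬ ∀ v ∈ e, v ∈ W) ∧ (¬ ∀ v ∈ e, v ∉ W) := by
    intro e he
    rw [hEM, Finset.mem_filter, Finset.mem_filter] at he
    exact ⟨he.1.1, he.1.2, he.2⟩
  have hbM : ∑ e ∈ EM, ((nE e : ℤ) - 1) ≤ (k : ℤ) * A := by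
    have hstep1 : ∀ e ∈ EM, ((nE e : ℤ) - 1) ≤ (nV (pickOut W e) : ℤ) - 1 := by
      intro e he
      have h : nE e ≤ nV (pickOut W e) := by
        apply card_le_card
        intro X hX
        rw [Finset.mem_filter] at hX ⊢
        exact ⟨hX.1, hX.2 _ (pickOut_mem W e)⟩
      have h' : (nE e : ℤ) ≤ (nV (pickOut W e) : ℤ) := by exact_mod_cast h
      linarith
    have hpickY : ∀ e ∈ EM, pickOut W e ∈ Y \ W := by
      intro e he
      obtain ⟨heEU, hp0, hp2⟩ := hEMfacts e he
      exact Finset.mem_sdiff.mpr ⟨hEUYv e heEU _ (pickOut_mem W e), pickOut_not_mem hp0⟩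
    calc ∑ e ∈ EM, ((nE e : ℤ) - 1) ≤ ∑ e ∈ EM, ((nV (pickOut W e) : ℤ) - 1) :=
          Finset.sum_le_sum hstep1
      _ = ∑ v ∈ EM.image (pickOut W),
            (EM.filter (fun e => pickOut W e = v)).card • ((nV v : ℤ) - 1) :=
          Finset.sum_comp (fun v => ((nV v : ℤ) - 1)) (pickOut W)
      _ ≤ ∑ v ∈ EM.image (pickOut W), (k : ℤ) * ((nV v : ℤ) - 1) := by
          apply Finset.sum_le_sum
          intro v hv
          rw [nsmul_eq_mul]
          obtain ⟨e0, he0, hve0⟩ := Finset.mem_image.mp hv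
          have hvY : v ∈ Y \ W := hve0 ▸ hpickY e0 he0
          have hnVv : (1 : ℤ) ≤ (nV v : ℤ) := by
            exact_mod_cast hnV1 v (Finset.mem_sdiff.mp hvY).1
          apply mul_le_mul_of_nonneg_right ?_ (by linarith)
          have hfib : (EM.filter (fun e => pickOut W e = v)).card ≤ W.card := by
            apply Finset.card_le_card_of_injOn (pickIn W)
            · intro e he
              rw [Finset.mem_coe, Finset.mem_filter] at he
              exact pickIn_mem_W (hEMfacts e he.1).2.2
            · intro e he e' he' hee
              rw [Finset.mem_coe, Finset.mem_filter] at he he'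
              calc e = s(pickIn W e, pickOut W e) := pick_spec W e
                _ = s(pickIn W e', pickOut W e') := by rw [hee, he.2, he'.2]
                _ = e' := (pick_spec W e').symm
          calc ((EM.filter (fun e => pickOut W e = v)).card : ℤ) ≤ (W.card : ℤ) := by
                exact_mod_cast hfib
            _ = (k : ℤ) := by exact_mod_cast hWk
      _ ≤ (k : ℤ) * A := by
          rw [← Finset.mul_sum, hA]
          apply mul_le_mul_of_nonneg_left ?_ (by positivity)
          apply Finset.sum_le_sum_of_subset_of_nonneg
          · intro v hv
            obtain ⟨e0, he0, hve0⟩ := Finset.mem_image.mp hv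
            exact hve0 ▸ hpickY e0 he0
          · intro v hv _
            have : (1 : ℤ) ≤ (nV v : ℤ) := by
              exact_mod_cast hnV1 v (Finset.mem_sdiff.mp hv).1
            linarith
  -- outside edges bound
  set E2 := (EU.filter (fun e => ¬ ∀ v ∈ e, v ∈ W)).filter (fun e => ∀ v ∈ e, v ∉ W)
    with hE2
  have hE2facts : ∀ e ∈ E2, e ∈ EU ∧ ∀ v ∈ e, v ∉ W := by
    intro e he
    rw [hE2, Finset.mem_filter, Finset.mem_filter] at he
    exact ⟨he.1.1, he.2⟩
  have hb2 : ∑ e ∈ E2, ((nE e : ℤ) - 1) ≤ B := by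
    set E2' := E2.filter (fun e => 2 ≤ nE e) with hE2'
    have hstep : ∑ e ∈ E2, ((nE e : ℤ) - 1) = ∑ e ∈ E2', ((nE e : ℤ) - 1) := by
      symm
      apply Finset.sum_subset (Finset.filter_subset _ _)
      intro e he he'
      have h1 : 1 ≤ nE e := hnE1 e (hE2facts e he).1
      have h2 : ¬ 2 ≤ nE e := fun h => he' (Finset.mem_filter.mpr ⟨he, h⟩)
      have h3 : nE e = 1 := by omega
      rw [h3]; norm_num
    rw [hstep]
    have hE2'facts : ∀ e ∈ E2', e ∈ EU ∧ (∀ v ∈ e, v ∉ W) ∧ 2 ≤ nE e := by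
      intro e he
      rw [hE2', Finset.mem_filter] at he
      exact ⟨(hE2facts e he.1).1, (hE2facts e he.1).2, he.2⟩
    -- key properties of the map e ↦ W ∪ {e.out.1, e.out.2}
    have hkey : ∀ e ∈ E2',
        (W ∪ {e.out.1, e.out.2}) ∈ (theta V 𝒳 (k + 2)).filter (fun X => W ⊂ X)
        ∧ degX 𝒳 (W ∪ {e.out.1, e.out.2}) = nE e := by
      intro e he
      obtain ⟨heEU, hp2, h2⟩ := hE2'facts e he
      have heE : e ∈ E := hEUE heEU
      have hab : e.out.1 ≠ e.out.2 := sym2_out_ne (hval e heE).1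
      have haY : e.out.1 ∈ Y := hEUYv e heEU _ (Sym2.out_fst_mem e)
      have hbY : e.out.2 ∈ Y := hEUYv e heEU _ (Sym2.out_snd_mem e)
      have haW : e.out.1 ∉ W := hp2 _ (Sym2.out_fst_mem e)
      have hbW : e.out.2 ∉ W := hp2 _ (Sym2.out_snd_mem e)
      have he_eq : e = s(e.out.1, e.out.2) := by conv_lhs => rw [← e.out_eq]
      have hdisj : Disjoint W ({e.out.1, e.out.2} : Finset α) := by
        rw [Finset.disjoint_right]
        intro a ha
        rw [Finset.mem_insert, Finset.mem_singleton] at ha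
        rcases ha with rfl | rfl
        · exact haW
        · exact hbW
      have hcard2 : ({e.out.1, e.out.2} : Finset α).card = 2 := by
        rw [Finset.card_insert_of_notMem (by rwa [Finset.mem_singleton]),
          Finset.card_singleton]
      have hdeg : degX 𝒳 (W ∪ {e.out.1, e.out.2}) = nE e := by
        rw [degX]
        have heq : 𝒳.filter (fun X => W ∪ {e.out.1, e.out.2} ⊆ X)
            = 𝒳W.filter (fun X => ∀ v ∈ e, v ∈ X) := by
          rw [h𝒳W, Finset.filter_filter]
          apply Finset.filter_congr
          intro X _
          rw [Finset.union_subset_iff, Finset.insert_subset_iff, Finset.singleton_subset_iff]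
          constructor
          · rintro ⟨hWX, h1, h2⟩
            refine ⟨hWX, ?_⟩
            intro v hv
            rw [he_eq, Sym2.mem_iff] at hv
            rcases hv with rfl | rfl
            · exact h1
            · exact h2
          · rintro ⟨hWX, hall⟩
            exact ⟨hWX, hall _ (Sym2.out_fst_mem e), hall _ (Sym2.out_snd_mem e)⟩
        rw [heq]
      refine ⟨?_, hdeg⟩
      rw [Finset.mem_filter, theta, Finset.mem_filter, Finset.mem_powerset]
      refine ⟨⟨?_, ?_, ?_⟩, ?_⟩
      · exact Finset.union_subset hWV (by
          intro a ha
          rw [Finset.mem_insert, Finset.mem_singleton] at ha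
          rcases ha with rfl | rfl
          · exact hYV haY
          · exact hYV hbY)
      · rw [Finset.card_union_of_disjoint hdisj, hcard2, hWk]
      · rw [hdeg]; exact h2
      · rw [Finset.ssubset_iff_of_subset Finset.subset_union_left]
        exact ⟨e.out.1, Finset.mem_union_right _ (Finset.mem_insert_self _ _), haW⟩
    have hinj : ∀ e ∈ E2', ∀ e' ∈ E2',
        W ∪ {e.out.1, e.out.2} = W ∪ {e'.out.1, e'.out.2} → e = e' := by
      intro e he e' he' heq
      obtain ⟨heEU, hp2, -⟩ := hE2'facts e he
      obtain ⟨heEU', hp2', -⟩ := hE2'facts e' he'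
      have heE : e ∈ E := hEUE heEU
      have hab : e.out.1 ≠ e.out.2 := sym2_out_ne (hval e heE).1
      have hdisj : Disjoint W ({e.out.1, e.out.2} : Finset α) := by
        rw [Finset.disjoint_right]
        intro a ha
        rw [Finset.mem_insert, Finset.mem_singleton] at ha
        rcases ha with rfl | rfl
        · exact hp2 _ (Sym2.out_fst_mem e)
        · exact hp2 _ (Sym2.out_snd_mem e)
      have hdisj' : Disjoint W ({e'.out.1, e'.out.2} : Finset α) := by
        rw [Finset.disjoint_right]
        intro a ha
        rw [Finset.mem_insert, Finset.mem_singleton] at ha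
        rcases ha with rfl | rfl
        · exact hp2' _ (Sym2.out_fst_mem e')
        · exact hp2' _ (Sym2.out_snd_mem e')
      have hpair : ({e.out.1, e.out.2} : Finset α) = {e'.out.1, e'.out.2} := by
        rw [← Finset.union_sdiff_cancel_left hdisj, heq,
          Finset.union_sdiff_cancel_left hdisj']
      have hs := sym2_eq_of_pair_eq hab hpair
      calc e = s(e.out.1, e.out.2) := by conv_lhs => rw [← e.out_eq]
        _ = s(e'.out.1, e'.out.2) := hs
        _ = e' := by conv_rhs => rw [← e'.out_eq]
    calc ∑ e ∈ E2', ((nE e : ℤ) - 1)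
        = ∑ e ∈ E2', ((degX 𝒳 (W ∪ {e.out.1, e.out.2}) : ℤ) - 1) := by
          apply Finset.sum_congr rfl
          intro e he
          rw [(hkey e he).2]
      _ = ∑ U ∈ E2'.image (fun e => W ∪ {e.out.1, e.out.2}), ((degX 𝒳 U : ℤ) - 1) :=
          (Finset.sum_image (f := fun U => ((degX 𝒳 U : ℤ) - 1)) hinj).symm
      _ ≤ B := by
          rw [hB]
          apply Finset.sum_le_sum_of_subset_of_nonneg
          · intro U hU
            obtain ⟨e, he, rfl⟩ := Finset.mem_image.mp hU
            exact (hkey e he).1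
          · intro U hU _
            rw [Finset.mem_filter, theta, Finset.mem_filter] at hU
            have h2 : 2 ≤ degX 𝒳 U := hU.1.2.2
            have : (2 : ℤ) ≤ (degX 𝒳 U : ℤ) := by exact_mod_cast h2
            linarith
  -- combine
  have hT2 : T ≤ (k.choose 2 : ℤ) * ((m : ℤ) - 1) + (k : ℤ) * A + B := by
    rw [hsplit]
    linarith [hb0, hbM, hb2]
  have hid := choose_identity (le_of_lt hkd)
  have h5 : (k.choose 2 : ℤ) * ((m : ℤ) - 1) - (d : ℤ) * k * ((m : ℤ) - 1)
      + ((d + 1).choose 2 : ℤ) * ((m : ℤ) - 1)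
      = ((d + 1 - k).choose 2 : ℤ) * ((m : ℤ) - 1) := by
    have h6 : (k.choose 2 : ℤ) - (d : ℤ) * k + ((d + 1).choose 2 : ℤ)
        = ((d + 1 - k).choose 2 : ℤ) := by linarith [hid]
    calc (k.choose 2 : ℤ) * ((m : ℤ) - 1) - (d : ℤ) * k * ((m : ℤ) - 1)
        + ((d + 1).choose 2 : ℤ) * ((m : ℤ) - 1)
        = ((k.choose 2 : ℤ) - (d : ℤ) * k + ((d + 1).choose 2 : ℤ)) * ((m : ℤ) - 1) := by ring
      _ = ((d + 1 - k).choose 2 : ℤ) * ((m : ℤ) - 1) := by rw [h6]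
  rw [hAθ, hdegW]
  linarith [hT1, hT2, h5]
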